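/- Let x1, x2, x3 ∈ ℝ^N be linearly independent unit vectors all of whose pairwise angles θ12, θ13, θ23 lie in the interval [π/3, π/2]. Then the area Ω = A1 + A2 + A3 − π of the spherical triangle with vertices x1, x2, x3 satisfies Ω ≤ π/2, i.e., the normalized solid angle Ω/(4π) ≤ 0.125; the bound is attained when the three vectors are pairwise orthogonal (as for the standard basis of ℤ³). -/

import Mathlib

open Real InnerProductGeometry
open scoped InnerProductSpace

lemma sphAux_le_arcsin {t : ℝ} (h0 : 0 ≤ t) (h1 : t ≤ 1) : t ≤ Real.arcsin t := by
  have h := Real.sin_le (Real.arcsin_nonneg.mpr h0)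
  rwa [Real.sin_arcsin (by linarith) h1] at h

lemma sphAux_arcsin_le {t : ℝ} (h0 : 0 ≤ t) (h1 : t ≤ 1) : Real.arcsin t ≤ π / 2 * t := by
  have hp := Real.pi_pos
  have hθ0 : 0 ≤ π / 2 * t := by positivity
  have hθ1 : π / 2 * t ≤ π / 2 := by nlinarith
  have hs : t ≤ Real.sin (π / 2 * t) := by
    have := Real.mul_le_sin hθ0 hθ1
    have h2 : 2 / π * (π / 2 * t) = t := by field_simp
    rwa [h2] at this
  calc Real.arcsin t ≤ Real.arcsin (Real.sin (π / 2 * t)) := Real.monotone_arcsin hs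
    _ = π / 2 * t := Real.arcsin_sin (by linarith) hθ1

lemma sphAux_mul_le_arcsin {t : ℝ} (h0 : -1 ≤ t) (h1 : t ≤ 0) : π / 2 * t ≤ Real.arcsin t := by
  have := sphAux_arcsin_le (t := -t) (by linarith) (by linarith)
  rw [Real.arcsin_neg] at this
  linarith



lemma sphAux_s_lb {u v : ℝ} (hu0 : 0 ≤ u) (hu : u ≤ 1/2) (hv0 : 0 ≤ v) (hv : v ≤ 1/2) :
    3/4 ≤ Real.sqrt (1-u^2) * Real.sqrt (1-v^2) := by
  rw [← Real.sqrt_mul (by nlinarith)]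
  have h : ((3:ℝ)/4) = Real.sqrt ((3/4)^2) := (Real.sqrt_sq (by norm_num)).symm
  rw [h]
  apply Real.sqrt_le_sqrt
  have h1 : (0:ℝ) ≤ 1/4 - u^2 := by nlinarith
  have h2 : (0:ℝ) ≤ 1/4 - v^2 := by nlinarith
  nlinarith [mul_nonneg h1 h2]

lemma sphAux_s_ub {u v : ℝ} (hu0 : 0 ≤ u) (hv0 : 0 ≤ v) :
    Real.sqrt (1-u^2) * Real.sqrt (1-v^2) ≤ 1 := by
  have h1 : Real.sqrt (1-u^2) ≤ 1 := Real.sqrt_le_one.mpr (by nlinarith)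
  have h2 : Real.sqrt (1-v^2) ≤ 1 := Real.sqrt_le_one.mpr (by nlinarith)
  nlinarith [Real.sqrt_nonneg (1-u^2), Real.sqrt_nonneg (1-v^2)]

set_option maxHeartbeats 1000000 in
lemma sphAux_neg_core {a b c D1 D2 D3 : ℝ} (ha0 : 0 ≤ a) (ha : a ≤ 1/2) (hb0 : 0 ≤ b)
    (hb : b ≤ 1/2) (hc0 : 0 ≤ c) (hc : c ≤ 1/2) (hneg : c < a*b)
    (hD1l : 3/4 ≤ D1) (hD1u : D1 ≤ 1) (hD2l : 3/4 ≤ D2) (hD2u : D2 ≤ 1)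
    (hD3l : 3/4 ≤ D3) (hD3u : D3 ≤ 1) :
    0 ≤ arcsin ((c - a*b)/D1) + arcsin ((b - a*c)/D2) + arcsin ((a - b*c)/D3) := by
  have hπ4 := Real.pi_le_four
  have hπ := Real.pi_pos
  have hD1p : 0 < D1 := by linarith
  have hD2p : 0 < D2 := by linarith
  have hD3p : 0 < D3 := by linarith
  have hab : a * b ≤ 1/4 := by nlinarith
  have hn2 : 0 ≤ b - a*c := by
    nlinarith [mul_le_mul_of_nonneg_left hneg.le ha0,
      mul_nonneg (show (0:ℝ) ≤ 1/2-a by linarith) (mul_nonneg ha0 hb0),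
      mul_nonneg (show (0:ℝ) ≤ 1/2-a by linarith) hb0]
  have hn3 : 0 ≤ a - b*c := by
    nlinarith [mul_le_mul_of_nonneg_left hneg.le hb0,
      mul_nonneg (show (0:ℝ) ≤ 1/2-b by linarith) (mul_nonneg hb0 ha0),
      mul_nonneg (show (0:ℝ) ≤ 1/2-b by linarith) ha0]
  have ht1neg : (c - a*b)/D1 ≤ 0 := div_nonpos_of_nonpos_of_nonneg (by linarith) hD1p.le
  have hinv : D1⁻¹ ≤ 4/3 := by
    rw [show (4:ℝ)/3 = (3/4:ℝ)⁻¹ by norm_num]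
    exact inv_anti₀ (by norm_num) hD1l
  have ht1lb : 4/3*(c - a*b) ≤ (c - a*b)/D1 := by
    have h' : (c-a*b) * (4/3) ≤ (c-a*b) * D1⁻¹ := mul_le_mul_of_nonpos_left hinv (by linarith)
    calc 4/3*(c-a*b) = (c-a*b)*(4/3) := by ring
      _ ≤ (c-a*b)*D1⁻¹ := h'
      _ = (c-a*b)/D1 := (div_eq_mul_inv _ _).symm
  have ht1ge : -1 ≤ (c - a*b)/D1 := by linarith
  have ht2lb : b - a*c ≤ (b - a*c)/D2 := by
    rw [le_div_iff₀ hD2p]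
    nlinarith [mul_le_mul_of_nonneg_left hD2u hn2]
  have ht3lb : a - b*c ≤ (a - b*c)/D3 := by
    rw [le_div_iff₀ hD3p]
    nlinarith [mul_le_mul_of_nonneg_left hD3u hn3]
  have ht2ub : (b - a*c)/D2 ≤ 1 := by
    rw [div_le_one hD2p]
    linarith [mul_nonneg ha0 hc0]
  have ht3ub : (a - b*c)/D3 ≤ 1 := by
    rw [div_le_one hD3p]
    linarith [mul_nonneg hb0 hc0]
  have ht2pos : 0 ≤ (b - a*c)/D2 := div_nonneg hn2 hD2p.le
  have ht3pos : 0 ≤ (a - b*c)/D3 := div_nonneg hn3 hD3p.le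
  have A1 := sphAux_mul_le_arcsin ht1ge ht1neg
  have A2 := sphAux_le_arcsin ht2pos ht2ub
  have A3 := sphAux_le_arcsin ht3pos ht3ub
  have key : 0 ≤ π/2 * (4/3*(c - a*b)) + (b - a*c) + (a - b*c) := by
    nlinarith [mul_nonneg hπ.le hc0,
      mul_nonneg (show (0:ℝ) ≤ 4-π by linarith) (mul_nonneg ha0 hb0),
      mul_nonneg (show (0:ℝ) ≤ 1/2-a by linarith) hb0,
      mul_nonneg (show (0:ℝ) ≤ 1/2-b by linarith) ha0,
      mul_nonneg (show (0:ℝ) ≤ 1/4-c by linarith) (add_nonneg ha0 hb0)]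
  have hm : π/2 * (4/3*(c - a*b)) ≤ π/2 * ((c - a*b)/D1) :=
    mul_le_mul_of_nonneg_left ht1lb (by linarith)
  linarith

lemma sphAux_sum_nonneg {a b c : ℝ} (ha0 : 0 ≤ a) (ha : a ≤ 1/2) (hb0 : 0 ≤ b)
    (hb : b ≤ 1/2) (hc0 : 0 ≤ c) (hc : c ≤ 1/2) :
    0 ≤ arcsin ((c - a*b)/(Real.sqrt (1-a^2)*Real.sqrt (1-b^2)))
      + arcsin ((b - a*c)/(Real.sqrt (1-a^2)*Real.sqrt (1-c^2)))
      + arcsin ((a - b*c)/(Real.sqrt (1-b^2)*Real.sqrt (1-c^2))) := by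
  have L1 := sphAux_s_lb ha0 ha hb0 hb
  have L2 := sphAux_s_lb ha0 ha hc0 hc
  have L3 := sphAux_s_lb hb0 hb hc0 hc
  have U1 := sphAux_s_ub (u := a) (v := b) ha0 hb0
  have U2 := sphAux_s_ub (u := a) (v := c) ha0 hc0
  have U3 := sphAux_s_ub (u := b) (v := c) hb0 hc0
  rcases lt_or_ge c (a*b) with h1 | h1
  · exact sphAux_neg_core ha0 ha hb0 hb hc0 hc h1 L1 U1 L2 U2 L3 U3
  rcases lt_or_ge b (a*c) with h2 | h2
  · have := sphAux_neg_core ha0 ha hc0 hc hb0 hb h2 L2 U2 L1 U1 L3 U3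
    rw [mul_comm c b] at this
    linarith
  rcases lt_or_ge a (b*c) with h3 | h3
  · have := sphAux_neg_core hc0 hc hb0 hb ha0 ha (by rw [mul_comm]; exact h3) L3 U3 L2 U2 L1 U1
    rw [mul_comm c b, mul_comm c a, mul_comm b a] at this
    linarith
  · have p1 : 0 ≤ arcsin ((c - a*b)/(Real.sqrt (1-a^2)*Real.sqrt (1-b^2))) :=
      Real.arcsin_nonneg.mpr (div_nonneg (by linarith) (by linarith))
    have p2 : 0 ≤ arcsin ((b - a*c)/(Real.sqrt (1-a^2)*Real.sqrt (1-c^2))) :=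
      Real.arcsin_nonneg.mpr (div_nonneg (by linarith) (by linarith))
    have p3 : 0 ≤ arcsin ((a - b*c)/(Real.sqrt (1-b^2)*Real.sqrt (1-c^2))) :=
      Real.arcsin_nonneg.mpr (div_nonneg (by linarith) (by linarith))
    linarith

open InnerProductGeometry in
lemma sphAux_angle_eq {N : ℕ} (x y z : EuclideanSpace ℝ (Fin N)) (hx : ‖x‖ = 1)
    (hy : ‖y‖ = 1) (hz : ‖z‖ = 1) :
    angle (Submodule.orthogonalProjectionOnto (ℝ ∙ x)ᗮ y) (Submodule.orthogonalProjectionOnto (ℝ ∙ x)ᗮ z)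
      = π/2 - arcsin ((⟪y, z⟫_ℝ - ⟪x, y⟫_ℝ * ⟪x, z⟫_ℝ) /
          (Real.sqrt (1-⟪x, y⟫_ℝ^2) * Real.sqrt (1-⟪x, z⟫_ℝ^2))) := by
  have hxx : ⟪x, x⟫_ℝ = 1 := by
    rw [real_inner_self_eq_norm_sq, hx]; norm_num
  have hpy : ((Submodule.orthogonalProjectionOnto (ℝ ∙ x)ᗮ y : ↥(ℝ ∙ x)ᗮ) : EuclideanSpace ℝ (Fin N))
      = y - ⟪x, y⟫_ℝ • x := by
    rw [Submodule.orthogonalProjectionOnto_orthogonal]; exact congrArg (y - ·) (Submodule.starProjection_unit_singleton ℝ hx y)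
  have hpz : ((Submodule.orthogonalProjectionOnto (ℝ ∙ x)ᗮ z : ↥(ℝ ∙ x)ᗮ) : EuclideanSpace ℝ (Fin N))
      = z - ⟪x, z⟫_ℝ • x := by
    rw [Submodule.orthogonalProjectionOnto_orthogonal]; exact congrArg (z - ·) (Submodule.starProjection_unit_singleton ℝ hx z)
  have key : ∀ u v : EuclideanSpace ℝ (Fin N),
      ⟪u - ⟪x, u⟫_ℝ • x, v - ⟪x, v⟫_ℝ • x⟫_ℝ = ⟪u, v⟫_ℝ - ⟪x, u⟫_ℝ * ⟪x, v⟫_ℝ := by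
    intro u v
    rw [inner_sub_left, inner_sub_right, inner_sub_right]
    simp only [real_inner_smul_left, real_inner_smul_right, hxx]
    rw [real_inner_comm x u]
    ring
  have hinner : ⟪Submodule.orthogonalProjectionOnto (ℝ ∙ x)ᗮ y, Submodule.orthogonalProjectionOnto (ℝ ∙ x)ᗮ z⟫_ℝ
      = ⟪y, z⟫_ℝ - ⟪x, y⟫_ℝ * ⟪x, z⟫_ℝ := by
    rw [Submodule.coe_inner, hpy, hpz, key]
  have hny : ‖Submodule.orthogonalProjectionOnto (ℝ ∙ x)ᗮ y‖ = Real.sqrt (1 - ⟪x, y⟫_ℝ^2) := by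
    rw [← Submodule.norm_coe, hpy, norm_eq_sqrt_real_inner, key]
    rw [real_inner_self_eq_norm_sq, hy]
    congr 1; ring
  have hnz : ‖Submodule.orthogonalProjectionOnto (ℝ ∙ x)ᗮ z‖ = Real.sqrt (1 - ⟪x, z⟫_ℝ^2) := by
    rw [← Submodule.norm_coe, hpz, norm_eq_sqrt_real_inner, key]
    rw [real_inner_self_eq_norm_sq, hz]
    congr 1; ring
  have hA := cos_angle (Submodule.orthogonalProjectionOnto (ℝ ∙ x)ᗮ y) (Submodule.orthogonalProjectionOnto (ℝ ∙ x)ᗮ z)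
  rw [hinner, hny, hnz] at hA
  rw [← Real.arccos_cos (angle_nonneg _ _) (angle_le_pi _ _), hA,
    Real.arccos_eq_pi_div_two_sub_arcsin]

/-- The area (in steradians) of the spherical triangle with vertices `xi/‖xi‖`, computed by
Girard's formula `Ω = A1 + A2 + A3 - π`, where `Ai` is the angle between the orthogonal
projections of `xj` and `xk` onto the orthogonal complement of `xi`. The normalized solid
angle spanned by `x1, x2, x3` is `sphTriArea x1 x2 x3 / (4π)`. -/
noncomputable def sphTriArea {N : ℕ} (x1 x2 x3 : EuclideanSpace ℝ (Fin N)) : ℝ :=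
  angle (Submodule.orthogonalProjectionOnto (ℝ ∙ x1)ᗮ x2) (Submodule.orthogonalProjectionOnto (ℝ ∙ x1)ᗮ x3)
  + angle (Submodule.orthogonalProjectionOnto (ℝ ∙ x2)ᗮ x1) (Submodule.orthogonalProjectionOnto (ℝ ∙ x2)ᗮ x3)
  + angle (Submodule.orthogonalProjectionOnto (ℝ ∙ x3)ᗮ x1) (Submodule.orthogonalProjectionOnto (ℝ ∙ x3)ᗮ x2)
  - π

/-- Let `x1, x2, x3 ∈ ℝ^N` be linearly independent unit vectors all of whose
pairwise angles lie in `[π/3, π/2]`. Then the area `Ω` of the spherical triangle with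
vertices `x1, x2, x3` satisfies `Ω ≤ π/2`, i.e. the normalized solid angle
`Ω/(4π) ≤ 0.125`; the bound is attained when the three vectors are pairwise orthogonal. -/
theorem spherical_area_upper_bound {N : ℕ}
    (x1 x2 x3 : EuclideanSpace ℝ (Fin N))
    (hind : LinearIndependent ℝ ![x1, x2, x3])
    (hn1 : ‖x1‖ = 1) (hn2 : ‖x2‖ = 1) (hn3 : ‖x3‖ = 1)
    (h12 : π / 3 ≤ angle x1 x2 ∧ angle x1 x2 ≤ π / 2)
    (h13 : π / 3 ≤ angle x1 x3 ∧ angle x1 x3 ≤ π / 2)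
    (h23 : π / 3 ≤ angle x2 x3 ∧ angle x2 x3 ≤ π / 2) :
    sphTriArea x1 x2 x3 ≤ π / 2 ∧
    sphTriArea x1 x2 x3 / (4 * π) ≤ 0.125 ∧
    (angle x1 x2 = π / 2 → angle x1 x3 = π / 2 → angle x2 x3 = π / 2 →
      sphTriArea x1 x2 x3 = π / 2) := by

  classical
  have hca : Real.cos (angle x1 x2) = ⟪x1, x2⟫_ℝ := by
    rw [cos_angle, hn1, hn2]; norm_num
  have hcb : Real.cos (angle x1 x3) = ⟪x1, x3⟫_ℝ := by
    rw [cos_angle, hn1, hn3]; norm_num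
  have hcc : Real.cos (angle x2 x3) = ⟪x2, x3⟫_ℝ := by
    rw [cos_angle, hn2, hn3]; norm_num
  have hπ := Real.pi_pos
  have ha0 : 0 ≤ ⟪x1, x2⟫_ℝ := by
    rw [← hca]
    exact Real.cos_nonneg_of_mem_Icc ⟨by linarith [angle_nonneg x1 x2], h12.2⟩
  have hb0 : 0 ≤ ⟪x1, x3⟫_ℝ := by
    rw [← hcb]
    exact Real.cos_nonneg_of_mem_Icc ⟨by linarith [angle_nonneg x1 x3], h13.2⟩
  have hc0 : 0 ≤ ⟪x2, x3⟫_ℝ := by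
    rw [← hcc]
    exact Real.cos_nonneg_of_mem_Icc ⟨by linarith [angle_nonneg x2 x3], h23.2⟩
  have ha : ⟪x1, x2⟫_ℝ ≤ 1/2 := by
    rw [← hca, ← Real.cos_pi_div_three]
    exact Real.cos_le_cos_of_nonneg_of_le_pi (by positivity) (angle_le_pi x1 x2) h12.1
  have hb : ⟪x1, x3⟫_ℝ ≤ 1/2 := by
    rw [← hcb, ← Real.cos_pi_div_three]
    exact Real.cos_le_cos_of_nonneg_of_le_pi (by positivity) (angle_le_pi x1 x3) h13.1
  have hc : ⟪x2, x3⟫_ℝ ≤ 1/2 := by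
    rw [← hcc, ← Real.cos_pi_div_three]
    exact Real.cos_le_cos_of_nonneg_of_le_pi (by positivity) (angle_le_pi x2 x3) h23.1
  have e1 := sphAux_angle_eq x1 x2 x3 hn1 hn2 hn3
  have e2 := sphAux_angle_eq x2 x1 x3 hn2 hn1 hn3
  have e3 := sphAux_angle_eq x3 x1 x2 hn3 hn1 hn2
  rw [real_inner_comm x1 x2] at e2
  rw [real_inner_comm x1 x3, real_inner_comm x2 x3] at e3
  have hΩ : sphTriArea x1 x2 x3
      = π/2 - (arcsin ((⟪x2, x3⟫_ℝ - ⟪x1, x2⟫_ℝ * ⟪x1, x3⟫_ℝ) /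
            (Real.sqrt (1-⟪x1, x2⟫_ℝ^2) * Real.sqrt (1-⟪x1, x3⟫_ℝ^2)))
          + arcsin ((⟪x1, x3⟫_ℝ - ⟪x1, x2⟫_ℝ * ⟪x2, x3⟫_ℝ) /
            (Real.sqrt (1-⟪x1, x2⟫_ℝ^2) * Real.sqrt (1-⟪x2, x3⟫_ℝ^2)))
          + arcsin ((⟪x1, x2⟫_ℝ - ⟪x1, x3⟫_ℝ * ⟪x2, x3⟫_ℝ) /
            (Real.sqrt (1-⟪x1, x3⟫_ℝ^2) * Real.sqrt (1-⟪x2, x3⟫_ℝ^2)))) := by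
    rw [sphTriArea, e1, e2, e3]; ring
  have hS := sphAux_sum_nonneg ha0 ha hb0 hb hc0 hc
  have main : sphTriArea x1 x2 x3 ≤ π / 2 := by rw [hΩ]; linarith
  refine ⟨main, ?_, ?_⟩
  · rw [div_le_iff₀ (by positivity)]
    have h4 : (0.125 : ℝ) * (4 * π) = π/2 := by ring
    linarith
  · intro k12 k13 k23
    have ha' : ⟪x1, x2⟫_ℝ = 0 := by rw [← hca, k12, Real.cos_pi_div_two]
    have hb' : ⟪x1, x3⟫_ℝ = 0 := by rw [← hcb, k13, Real.cos_pi_div_two]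
    have hc' : ⟪x2, x3⟫_ℝ = 0 := by rw [← hcc, k23, Real.cos_pi_div_two]
    rw [ha', hb', hc'] at hΩ
    norm_num [Real.arcsin_zero] at hΩ
    exact hΩ
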